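/- In an accepting run of the 2AFW A_{⟨U⟩φ'} on a trace π from position i, there exists a node v with configuration (φ', j) for some position j, reachable from the root via a path; in particular, no accepting run of A_{⟨U⟩φ'} consists solely of diamond-state configurations along every branch. -/

import Mathlib

/-- Propositional formulas over atomic propositions `AP`. -/
inductive PropF (AP : Type) where
  | atom : AP → PropF AP
  | neg : PropF AP → PropF AP
  | conj : PropF AP → PropF AP → PropF AP
  | disj : PropF AP → PropF AP → PropF AP

/-- Truth of a propositional formula in a propositional interpretation. -/
def PropF.holds {AP : Type} (s : Set AP) : PropF AP → Prop
  | .atom p => p ∈ s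
  | .neg ζ => ¬ ζ.holds s
  | .conj a b => a.holds s ∧ b.holds s
  | .disj a b => a.holds s ∨ b.holds s

mutual
/-- ALDLf formulas. -/
inductive ALDLf (AP : Type) where
  | atom : AP → ALDLf AP
  | neg : ALDLf AP → ALDLf AP
  | conj : ALDLf AP → ALDLf AP → ALDLf AP
  | disj : ALDLf AP → ALDLf AP → ALDLf AP
  | dia : PathAut AP → ALDLf AP → ALDLf AP
  | box : PathAut AP → ALDLf AP → ALDLf AP

/-- Alphabet letters of a path automaton: forward propositional labels ζ,
backward (past) labels ζ⁻, and tests ψ?. -/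
inductive PALabel (AP : Type) where
  | fwd : PropF AP → PALabel AP
  | bwd : PropF AP → PALabel AP
  | test : ALDLf AP → PALabel AP

/-- A path automaton `(R, T, Δ, r, G)`: states, alphabet, transitions,
start state, accepting states.  States are natural numbers. -/
inductive PathAut (AP : Type) where
  | mk : List ℕ → List (PALabel AP) → List (ℕ × PALabel AP × ℕ) → ℕ → List ℕ → PathAut AP
end

/-- Satisfaction of a propositional formula at position `k` of a trace. -/
def propAt {AP : Type} (π : List (Set AP)) (k : ℕ) (ζ : PropF AP) : Prop :=
  ∃ s, π[k]? = some s ∧ ζ.holds s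

/-- One step of a path automaton over a trace, with tests evaluated by the
oracle `T`. -/
def AutStep {AP : Type} (T : ℕ → ALDLf AP → Prop) (π : List (Set AP))
    (Δ : List (ℕ × PALabel AP × ℕ)) (c c' : ℕ × ℕ) : Prop :=
  (c'.2 = c.2 + 1 ∧ ∃ ζ, (c.1, PALabel.fwd ζ, c'.1) ∈ Δ ∧ propAt π c.2 ζ) ∨
  (c'.2 + 1 = c.2 ∧ ∃ ζ, (c.1, PALabel.bwd ζ, c'.1) ∈ Δ ∧ propAt π c.2 ζ) ∨
  (c'.2 = c.2 ∧ ∃ ψ, (c.1, PALabel.test ψ, c'.1) ∈ Δ ∧ T c.2 ψ)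

/-- `π,i,j ⊨ U`, with tests evaluated by the oracle `T`: either `i = j` and the
start state is accepting, or there is a finite sequence of state–position pairs
following the transitions of `U` from `(r,i)` to an accepting state at `j`. -/
def AutRelO {AP : Type} (T : ℕ → ALDLf AP → Prop) (π : List (Set AP)) :
    PathAut AP → ℕ → ℕ → Prop
  | .mk _ _ Δ r G, i, j =>
    (i = j ∧ r ∈ G) ∨
    ∃ seq : List (ℕ × ℕ), seq.head? = some (r, i) ∧
      (∃ l, seq.getLast? = some l ∧ l.1 ∈ G ∧ l.2 = j) ∧
      (∀ e ∈ seq, e.2 < π.length) ∧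
      (∀ m, ∀ h : m + 1 < seq.length,
        AutStep T π Δ (seq.get ⟨m, by omega⟩) (seq.get ⟨m + 1, h⟩))

/-- Fuelled satisfaction relation for ALDLf.  The fuel strictly exceeds the
structural size (`sizeOf`) of every formula it is ever applied to, so
`satF (sizeOf φ) π i φ` agrees with the intended (well-founded) semantics. -/
def satF {AP : Type} : ℕ → List (Set AP) → ℕ → ALDLf AP → Prop
  | 0, _, _, _ => False
  | _ + 1, π, i, .atom p => ∃ s, π[i]? = some s ∧ p ∈ s
  | n + 1, π, i, .neg φ => ¬ satF n π i φ
  | n + 1, π, i, .conj a b => satF n π i a ∧ satF n π i b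
  | n + 1, π, i, .disj a b => satF n π i a ∨ satF n π i b
  | n + 1, π, i, .dia U φ =>
      ∃ j, j < π.length ∧ AutRelO (fun k ψ => satF n π k ψ) π U i j ∧ satF n π j φ
  | n + 1, π, i, .box U φ =>
      ∀ j, j < π.length → AutRelO (fun k ψ => satF n π k ψ) π U i j → satF n π j φ

/-- `π,i ⊨ φ` for ALDLf. -/
def ALDLf.Sat {AP : Type} (π : List (Set AP)) (i : ℕ) (φ : ALDLf AP) : Prop :=
  satF (sizeOf φ) π i φ

/-- `π,i,j ⊨ U` with tests evaluated by genuine ALDLf satisfaction. -/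
def AutRel {AP : Type} (π : List (Set AP)) (U : PathAut AP) (i j : ℕ) : Prop :=
  AutRelO (fun k ψ => ALDLf.Sat π k ψ) π U i j

/-- The size `|φ|` of an ALDLf formula, as in the paper. -/
def ALDLf.size {AP : Type} : ALDLf AP → ℕ
  | .atom _ => 1
  | .neg φ => 3 + φ.size
  | .conj a b => 3 + a.size + b.size
  | .disj a b => 3 + a.size + b.size
  | .dia (.mk R _ _ _ _) φ => 4 + R.length + φ.size
  | .box (.mk R _ _ _ _) φ => 4 + R.length + φ.size
mutual
/-- Negation normal form of an ALDLf formula (negations pushed to atoms,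
including inside tests of path automata). -/
def nnf {AP : Type} : ALDLf AP → ALDLf AP
  | .atom p => .atom p
  | .neg φ => nnfNeg φ
  | .conj a b => .conj (nnf a) (nnf b)
  | .disj a b => .disj (nnf a) (nnf b)
  | .dia U φ => .dia (nnfAut U) (nnf φ)
  | .box U φ => .box (nnfAut U) (nnf φ)

/-- Negation normal form of the negation of an ALDLf formula. -/
def nnfNeg {AP : Type} : ALDLf AP → ALDLf AP
  | .atom p => .neg (.atom p)
  | .neg φ => nnf φ
  | .conj a b => .disj (nnfNeg a) (nnfNeg b)
  | .disj a b => .conj (nnfNeg a) (nnfNeg b)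
  | .dia U φ => .box (nnfAut U) (nnfNeg φ)
  | .box U φ => .dia (nnfAut U) (nnfNeg φ)

def nnfLabel {AP : Type} : PALabel AP → PALabel AP
  | .fwd ζ => .fwd ζ
  | .bwd ζ => .bwd ζ
  | .test ψ => .test (nnf ψ)

def nnfLabels {AP : Type} : List (PALabel AP) → List (PALabel AP)
  | [] => []
  | l :: ls => nnfLabel l :: nnfLabels ls

def nnfTrans {AP : Type} : List (ℕ × PALabel AP × ℕ) → List (ℕ × PALabel AP × ℕ)
  | [] => []
  | (a, l, b) :: ls => (a, nnfLabel l, b) :: nnfTrans ls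

def nnfAut {AP : Type} : PathAut AP → PathAut AP
  | .mk R T Δ r G => .mk R (nnfLabels T) (nnfTrans Δ) r G
end
/-- Positive Boolean formulas over `X` (with `true` and `false`, no negation). -/
inductive PBF (X : Type) where
  | tru : PBF X
  | fls : PBF X
  | var : X → PBF X
  | conj : PBF X → PBF X → PBF X
  | disj : PBF X → PBF X → PBF X

/-- A set `M ⊆ X` satisfies a positive Boolean formula. -/
def PBF.satBy {X : Type} (M : Set X) : PBF X → Prop
  | .tru => True
  | .fls => False
  | .var x => x ∈ M
  | .conj a b => a.satBy M ∧ b.satBy M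
  | .disj a b => a.satBy M ∨ b.satBy M

/-- Directions of a two-way automaton: −1, 0, 1. -/
inductive Dir where
  | back : Dir
  | stay : Dir
  | fwd : Dir
deriving DecidableEq

/-- Applying a direction to a position (undefined when moving left of 0). -/
def Dir.apply : Dir → ℕ → Option ℕ
  | .back, 0 => none
  | .back, i + 1 => some i
  | .stay, i => some i
  | .fwd, i => some (i + 1)

/-- A two-way alternating automaton on finite words `(Q, Σ, δ, q₀, F)`. -/
structure TAFW (Q A : Type) where
  delta : Q → A → PBF (Q × Dir)
  start : Q
  acc : Set Q

/-- Configurations of a 2AFW: a state with a read position, or `Accept`. -/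
inductive Config (Q : Type) where
  | conf : Q → ℕ → Config Q
  | accept : Config Q

variable {Q A : Type}

/-- `ρ` (a partial labelling of the tree of finite index sequences) is a run of
the 2AFW `M` on `w` from position `k`. -/
structure IsRun (M : TAFW Q A) (w : List A) (k : ℕ)
    (ρ : List ℕ → Option (Config Q)) : Prop where
  root : ρ [] = some (.conf M.start k)
  tree : ∀ x n, (ρ (x ++ [n])).isSome → (ρ x).isSome
  accept_leaf : ∀ x, ρ x = some .accept → ∀ n, ρ (x ++ [n]) = none
  node : ∀ x q i, ρ x = some (.conf q i) → ∃ a, w[i]? = some a ∧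
    ((M.delta q a = .fls ∧ ∀ n, ρ (x ++ [n]) = none) ∨
     (M.delta q a = .tru ∧ (∃ n, ρ (x ++ [n]) = some .accept) ∧
        ∀ n c, ρ (x ++ [n]) = some c → c = .accept) ∨
     (M.delta q a ≠ .tru ∧ M.delta q a ≠ .fls ∧
       ∃ S : Set (Q × Dir), (M.delta q a).satBy S ∧
         (∀ τ ∈ S, ∃ n j, τ.2.apply i = some j ∧ ρ (x ++ [n]) = some (.conf τ.1 j)) ∧
         (∀ n c, ρ (x ++ [n]) = some c →
            ∃ τ ∈ S, ∃ j, τ.2.apply i = some j ∧ c = .conf τ.1 j)))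

/-- A leaf of the run tree. -/
def IsLeaf (ρ : List ℕ → Option (Config Q)) (x : List ℕ) : Prop :=
  (ρ x).isSome ∧ ∀ n, ρ (x ++ [n]) = none

/-- An infinite branch of the run tree, given by successive child indices. -/
def InfBranch (ρ : List ℕ → Option (Config Q)) (b : ℕ → ℕ) : Prop :=
  ∀ n, (ρ ((List.range n).map b)).isSome

/-- A run is accepting when every finite branch ends in `Accept` and every
infinite branch has some accepting state occurring infinitely often. -/
def AcceptingRun (M : TAFW Q A) (w : List A) (k : ℕ)
    (ρ : List ℕ → Option (Config Q)) : Prop :=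
  IsRun M w k ρ ∧
  (∀ x, IsLeaf ρ x → ρ x = some .accept) ∧
  (∀ b, InfBranch ρ b →
    ∃ f ∈ M.acc, ∀ N, ∃ n ≥ N, ∃ i, ρ ((List.range n).map b) = some (.conf f i))

/-- The 2AFW `M` accepts `w` from position `k`. -/
def TAFW.Accepts (M : TAFW Q A) (w : List A) (k : ℕ) : Prop :=
  ∃ ρ, AcceptingRun M w k ρ
open scoped Classical

/-- Replace the start state of a path automaton. -/
def PathAut.withStart {AP : Type} : PathAut AP → ℕ → PathAut AP
  | .mk R T Δ _ G, r' => .mk R T Δ r' G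

/-- Transition formula of the 2AFW for a diamond formula `⟨U⟩φ'` with current
path-automaton state `r`, on reading the letter `s` (rule 5). -/
noncomputable def diaTrans {AP : Type} (s : Set AP) (R : List ℕ)
    (T : List (PALabel AP)) (Δ : List (ℕ × PALabel AP × ℕ)) (G : List ℕ)
    (φ' : ALDLf AP) (r : ℕ) : PBF (ALDLf AP × Dir) :=
  let arms : List (PBF (ALDLf AP × Dir)) := Δ.filterMap (fun t =>
    if t.1 = r then
      match t.2.1 with
      | .fwd ζ => if ζ.holds s then
          some (.var (ALDLf.dia (.mk R T Δ t.2.2 G) φ', Dir.fwd)) else none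
      | .bwd ζ => if ζ.holds s then
          some (.var (ALDLf.dia (.mk R T Δ t.2.2 G) φ', Dir.back)) else none
      | .test ψ => some (.conj (.var (ψ, Dir.stay))
          (.var (ALDLf.dia (.mk R T Δ t.2.2 G) φ', Dir.stay)))
    else none)
  let base := arms.foldr PBF.disj PBF.fls
  if r ∈ G then PBF.disj (PBF.var (φ', Dir.stay)) base else base

/-- Transition formula of the 2AFW for a box formula `[U]φ'` (rule 6, dual). -/
noncomputable def boxTrans {AP : Type} (s : Set AP) (R : List ℕ)
    (T : List (PALabel AP)) (Δ : List (ℕ × PALabel AP × ℕ)) (G : List ℕ)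
    (φ' : ALDLf AP) (r : ℕ) : PBF (ALDLf AP × Dir) :=
  let arms : List (PBF (ALDLf AP × Dir)) := Δ.filterMap (fun t =>
    if t.1 = r then
      match t.2.1 with
      | .fwd ζ => if ζ.holds s then
          some (.var (ALDLf.box (.mk R T Δ t.2.2 G) φ', Dir.fwd)) else none
      | .bwd ζ => if ζ.holds s then
          some (.var (ALDLf.box (.mk R T Δ t.2.2 G) φ', Dir.back)) else none
      | .test ψ => some (.disj (.var (nnfNeg ψ, Dir.stay))
          (.var (ALDLf.box (.mk R T Δ t.2.2 G) φ', Dir.stay)))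
    else none)
  let base := arms.foldr PBF.conj PBF.tru
  if r ∈ G then PBF.conj (PBF.var (φ', Dir.stay)) base else base

/-- The transition function of the 2AFW `A_φ` built from an ALDLf formula in
negation normal form (Definition 10). -/
noncomputable def deltaOf {AP : Type} : ALDLf AP → Set AP → PBF (ALDLf AP × Dir)
  | .atom p, s => if p ∈ s then .tru else .fls
  | .neg (.atom p), s => if p ∈ s then .fls else .tru
  | .neg _, _ => .fls
  | .conj a b, _ => .conj (.var (a, Dir.stay)) (.var (b, Dir.stay))
  | .disj a b, _ => .disj (.var (a, Dir.stay)) (.var (b, Dir.stay))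
  | .dia (.mk R T Δ r G) φ', s => diaTrans s R T Δ G φ' r
  | .box (.mk R T Δ r G) φ', s => boxTrans s R T Δ G φ' r

/-- The 2AFW `A_φ` obtained from an ALDLf formula `φ`: states are formulas,
the start state is `φ`, and the accepting states are the box formulas. -/
noncomputable def autOf {AP : Type} (φ : ALDLf AP) : TAFW (ALDLf AP) (Set AP) where
  delta := deltaOf
  start := φ
  acc := {ψ | ∃ U χ, ψ = ALDLf.box U χ}


/-- Auxiliary: a satisfied disjunction-fold contains a satisfied disjunct. -/
lemma foldr_disj_sat {X : Type} {S : Set X} :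
    ∀ l : List (PBF X), (l.foldr PBF.disj PBF.fls).satBy S → ∃ a ∈ l, a.satBy S := by
  intro l
  induction l with
  | nil => intro h; exact absurd h (by simp [PBF.satBy])
  | cons a l ih =>
    intro h
    rcases h with h | h
    · exact ⟨a, List.mem_cons_self, h⟩
    · obtain ⟨b, hb, hs⟩ := ih h
      exact ⟨b, List.mem_cons_of_mem a hb, hs⟩

lemma foldr_disj_ne_tru {X : Type} (l : List (PBF X)) :
    l.foldr PBF.disj PBF.fls ≠ PBF.tru := by
  cases l <;> simp [List.foldr]

lemma diaTrans_ne_tru {AP : Type} (s : Set AP) (R : List ℕ)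
    (T : List (PALabel AP)) (Δ : List (ℕ × PALabel AP × ℕ)) (G : List ℕ)
    (φ' : ALDLf AP) (r : ℕ) : diaTrans s R T Δ G φ' r ≠ PBF.tru := by
  unfold diaTrans
  by_cases hg : r ∈ G
  · simp only [hg, if_true]
    intro h; cases h
  · simp only [hg, if_false]
    exact foldr_disj_ne_tru _

lemma diaTrans_sat {AP : Type} {S : Set (ALDLf AP × Dir)} (s : Set AP) (R : List ℕ)
    (T : List (PALabel AP)) (Δ : List (ℕ × PALabel AP × ℕ)) (G : List ℕ)
    (φ' : ALDLf AP) (r : ℕ) (h : (diaTrans s R T Δ G φ' r).satBy S) :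
    (φ', Dir.stay) ∈ S ∨ ∃ r' d, (ALDLf.dia (.mk R T Δ r' G) φ', d) ∈ S := by
  unfold diaTrans at h
  have hbase : ∀ (hb : ((Δ.filterMap (fun t =>
      if t.1 = r then
        match t.2.1 with
        | .fwd ζ => if ζ.holds s then
            some (.var (ALDLf.dia (.mk R T Δ t.2.2 G) φ', Dir.fwd)) else none
        | .bwd ζ => if ζ.holds s then
            some (.var (ALDLf.dia (.mk R T Δ t.2.2 G) φ', Dir.back)) else none
        | .test ψ => some (.conj (.var (ψ, Dir.stay))
            (.var (ALDLf.dia (.mk R T Δ t.2.2 G) φ', Dir.stay)))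
      else none)).foldr PBF.disj PBF.fls).satBy S),
      ∃ r' d, (ALDLf.dia (.mk R T Δ r' G) φ', d) ∈ S := by
    intro hb
    obtain ⟨a, ha, has⟩ := foldr_disj_sat _ hb
    obtain ⟨t, ht, hft⟩ := List.mem_filterMap.mp ha
    by_cases htr : t.1 = r
    · simp only [htr, if_true] at hft
      rcases hlab : t.2.1 with ζ | ζ | ψ <;> rw [hlab] at hft <;> dsimp only at hft
      · by_cases hζ : ζ.holds s
        · rw [if_pos hζ] at hft
          cases hft
          exact ⟨t.2.2, Dir.fwd, has⟩
        · rw [if_neg hζ] at hft; cases hft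
      · by_cases hζ : ζ.holds s
        · rw [if_pos hζ] at hft
          cases hft
          exact ⟨t.2.2, Dir.back, has⟩
        · rw [if_neg hζ] at hft; cases hft
      · cases hft
        exact ⟨t.2.2, Dir.stay, has.2⟩
    · rw [if_neg htr] at hft; cases hft
  by_cases hg : r ∈ G
  · simp only [hg, if_true] at h
    rcases h with h | h
    · exact Or.inl h
    · exact Or.inr (hbase h)
  · simp only [hg, if_false] at h
    exact Or.inr (hbase h)

/-- Every node of an accepting run of `A_φ` whose state is a diamond formula
has either a `φ'`-child (at the same position) or a diamond child of the same
family. -/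
lemma dia_node_child {AP : Type} (φroot : ALDLf AP) (π : List (Set AP)) (i : ℕ)
    (ρ : List ℕ → Option (Config (ALDLf AP)))
    (hρ : AcceptingRun (autOf φroot) π i ρ) (x : List ℕ)
    (R : List ℕ) (T : List (PALabel AP)) (Δ : List (ℕ × PALabel AP × ℕ))
    (G : List ℕ) (χ : ALDLf AP) (r k : ℕ)
    (hx : ρ x = some (.conf (ALDLf.dia (.mk R T Δ r G) χ) k)) :
    (∃ n, ρ (x ++ [n]) = some (.conf χ k)) ∨
    (∃ n r' j, ρ (x ++ [n]) = some (.conf (ALDLf.dia (.mk R T Δ r' G) χ) j)) := by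
  obtain ⟨a, ha, hcase⟩ := hρ.1.node x _ k hx
  have hdelta : (autOf φroot).delta (ALDLf.dia (.mk R T Δ r G) χ) a
      = diaTrans a R T Δ G χ r := rfl
  rcases hcase with ⟨hfls, hnone⟩ | ⟨htru, _⟩ | ⟨_, _, S, hsat, hall, _⟩
  · exfalso
    have hleaf : IsLeaf ρ x := ⟨by rw [hx]; rfl, hnone⟩
    have := hρ.2.1 x hleaf
    rw [hx] at this
    cases this
  · exact absurd (hdelta ▸ htru) (diaTrans_ne_tru a R T Δ G χ r)
  · rw [hdelta] at hsat
    rcases diaTrans_sat a R T Δ G χ r hsat with hm | ⟨r', d, hm⟩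
    · obtain ⟨n, j, hj, hc⟩ := hall _ hm
      have : k = j := by
        simpa [Dir.apply] using hj
      subst this
      exact Or.inl ⟨n, hc⟩
    · obtain ⟨n, j, hj, hc⟩ := hall _ hm
      exact Or.inr ⟨n, r', j, hc⟩

/-- If every node satisfying an invariant on non-accepting states has a child
satisfying the invariant, and the root satisfies it, the run is not accepting. -/
lemma no_branch {Q A : Type} (M : TAFW Q A) (w : List A) (k : ℕ)
    (ρ : List ℕ → Option (Config Q)) (hρ : AcceptingRun M w k ρ)
    (P : Q → Prop) (hacc : ∀ q, P q → q ∉ M.acc)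
    (hroot : ∃ q j, ρ [] = some (.conf q j) ∧ P q)
    (hstep : ∀ x q j, ρ x = some (.conf q j) → P q →
      ∃ n q' j', ρ (x ++ [n]) = some (.conf q' j') ∧ P q') : False := by
  classical
  have step : ∀ x, (∃ q j, ρ x = some (.conf q j) ∧ P q) →
      ∃ n, ∃ q j, ρ (x ++ [n]) = some (.conf q j) ∧ P q := by
    rintro x ⟨q, j, hx, hq⟩
    obtain ⟨n, q', j', h, hP⟩ := hstep x q j hx hq
    exact ⟨n, q', j', h, hP⟩
  let g : ℕ → {x : List ℕ // ∃ q j, ρ x = some (.conf q j) ∧ P q} := fun n =>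
    Nat.rec ⟨[], hroot⟩
      (fun _ p => ⟨p.1 ++ [Classical.choose (step p.1 p.2)],
        Classical.choose_spec (step p.1 p.2)⟩) n
  let b : ℕ → ℕ := fun n => Classical.choose (step (g n).1 (g n).2)
  have hg : ∀ n, (List.range n).map b = (g n).1 := by
    intro n
    induction n with
    | zero => rfl
    | succ n ih =>
      rw [List.range_succ, List.map_append, ih]
      rfl
  have hb : InfBranch ρ b := by
    intro n
    rw [hg]
    obtain ⟨q, j, hx, _⟩ := (g n).2
    rw [hx]; rfl
  obtain ⟨f, hf, hinf⟩ := hρ.2.2 b hb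
  obtain ⟨n, -, i', hni⟩ := hinf 0
  obtain ⟨q, j, hx, hq⟩ := (g n).2
  rw [hg, hx] at hni
  have : q = f := by
    have h := Option.some.inj hni
    cases h; rfl
  exact hacc f (this ▸ hq) hf


/-- every accepting run of `A_{⟨U⟩φ'}` on `π` from `i` contains
a node with configuration `(φ', j)` for some position `j`; in particular no
accepting run consists solely of diamond-state configurations. -/
theorem accepting_run_reaches_continuation {AP : Type} (U : PathAut AP)
    (φ' : ALDLf AP) (π : List (Set AP)) (hπ : π ≠ []) (i : ℕ) (hi : i < π.length)
    (ρ : List ℕ → Option (Config (ALDLf AP)))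
    (hρ : AcceptingRun (autOf (ALDLf.dia U φ')) π i ρ) :
    (∃ x j, ρ x = some (Config.conf φ' j)) ∧
    ¬ ∀ x q k, ρ x = some (Config.conf q k) → ∃ U' χ, q = ALDLf.dia U' χ := by
  obtain ⟨R, T, Δ, r, G⟩ := U
  have h1 : ∃ x j, ρ x = some (Config.conf φ' j) := by
    by_contra hno
    push_neg at hno
    refine no_branch _ π i ρ hρ
      (fun q => ∃ r', q = ALDLf.dia (.mk R T Δ r' G) φ') ?_ ?_ ?_
    · rintro q ⟨r', rfl⟩ ⟨U', χ', h⟩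
      cases h
    · exact ⟨_, i, hρ.1.root, r, rfl⟩
    · rintro x q j hx ⟨r', rfl⟩
      rcases dia_node_child _ π i ρ hρ x R T Δ G φ' r' j hx with ⟨n, hc⟩ | ⟨n, r'', j', hc⟩
      · exact absurd hc (hno _ _)
      · exact ⟨n, _, j', hc, r'', rfl⟩
  refine ⟨h1, fun hall => ?_⟩
  refine no_branch _ π i ρ hρ (fun q => ∃ U' χ, q = ALDLf.dia U' χ) ?_ ?_ ?_
  · rintro q ⟨U', χ, rfl⟩ ⟨U'', χ', h⟩
    cases h
  · exact ⟨_, i, hρ.1.root, _, _, rfl⟩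
  · rintro x q j hx ⟨U', χ, rfl⟩
    obtain ⟨R', T', Δ', r', G'⟩ := U'
    rcases dia_node_child _ π i ρ hρ x R' T' Δ' G' χ r' j hx with ⟨n, hc⟩ | ⟨n, r'', j', hc⟩
    · exact ⟨n, _, j, hc, hall _ _ _ hc⟩
    · exact ⟨n, _, j', hc, hall _ _ _ hc⟩
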